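/- Let M be an n×n complex matrix of type S with weight 0 (all row sums and all column sums of M are zero). Then there exists a constant w ∈ ℂ such that the adjugate of M equals w·E_n, i.e. every entry of adj M equals w. -/
import Mathlib

open Matrix Finset

/-- The all-ones `n × n` matrix `E_n = 1ₙ 1ₙᵀ`. -/
def En (n : ℕ) : Matrix (Fin n) (Fin n) ℂ := Matrix.of fun _ _ => 1

/-- A matrix (n ≥ 1) whose rows all sum to zero has determinant zero. -/
lemma det_eq_zero_of_row_sums {n : ℕ} (hn : 0 < n)
    (N : Matrix (Fin n) (Fin n) ℂ) (hN : ∀ i, ∑ j, N i j = 0) : N.det = 0 := by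
  rw [← Matrix.exists_mulVec_eq_zero_iff]
  refine ⟨fun _ => 1, ?_, ?_⟩
  · intro h
    simpa using congrFun h ⟨0, hn⟩
  · ext i
    simpa [Matrix.mulVec, dotProduct] using hN i

/-- Adjugate entries are independent of the first index when row sums vanish. -/
lemma adjugate_row_indep {n : ℕ} (hn : 0 < n)
    (N : Matrix (Fin n) (Fin n) ℂ) (hN : ∀ i, ∑ j, N i j = 0)
    (i i' j : Fin n) : N.adjugate i j = N.adjugate i' j := by
  rw [Matrix.adjugate_apply, Matrix.adjugate_apply]
  have hsplit : (Pi.single i 1 : Fin n → ℂ)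
      = (Pi.single i 1 - Pi.single i' 1) + Pi.single i' 1 := by
    abel
  rw [hsplit, Matrix.det_updateRow_add]
  have hz : (N.updateRow j ((Pi.single i 1 : Fin n → ℂ) - Pi.single i' 1)).det = 0 := by
    apply det_eq_zero_of_row_sums hn
    intro k
    by_cases hk : k = j
    · subst hk
      simp [Pi.single_apply, Finset.sum_sub_distrib]
    · simpa [Matrix.updateRow_ne hk] using hN k
  rw [hz, zero_add]

/-- The adjugate of a type S matrix of weight 0 (all row and column sums zero) is a
scalar multiple of `E_n`, i.e. has all entries equal. -/
theorem adjugate_of_weightless_typeS {n : ℕ}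
    (M : Matrix (Fin n) (Fin n) ℂ)
    (hrow : ∀ i, ∑ j, M i j = 0) (hcol : ∀ j, ∑ i, M i j = 0) :
    ∃ w : ℂ, M.adjugate = w • En n := by
  rcases Nat.eq_zero_or_pos n with h0 | hn
  · subst h0
    exact ⟨0, by ext i j; exact i.elim0⟩
  set i0 : Fin n := ⟨0, hn⟩
  have hT : ∀ i, ∑ j, Mᵀ i j = 0 := by
    intro i; simpa [Matrix.transpose_apply] using hcol i
  have colindep : ∀ i j j', M.adjugate i j = M.adjugate i j' := by
    intro i j j'
    have h1 : M.adjugate i j = Mᵀ.adjugate j i := by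
      rw [← Matrix.adjugate_transpose]; rfl
    have h2 : M.adjugate i j' = Mᵀ.adjugate j' i := by
      rw [← Matrix.adjugate_transpose]; rfl
    rw [h1, h2]
    exact adjugate_row_indep hn Mᵀ hT j j' i
  refine ⟨M.adjugate i0 i0, ?_⟩
  ext i j
  have : M.adjugate i j = M.adjugate i0 i0 := by
    rw [adjugate_row_indep hn M hrow i i0 j, colindep i0 j i0]
  simp [this, En]
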